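/- For every natural number n ≥ 1 and every real n×n matrix A with |det A| ≥ 1, the squared Frobenius norm satisfies ∑_{i,j} a_{ij}² ≥ n, and equality holds if and only if A is orthogonal, i.e. AᵀA = I. -/

import Mathlib

open Matrix Finset

/-- For every `n ≥ 1` and every real `n × n` matrix `A` with `|det A| ≥ 1`, the squared
Frobenius norm `∑ i j, (A i j)^2` is at least `n`, with equality iff `A` is orthogonal
(`Aᵀ * A = 1`). -/
theorem frobenius_sq_ge_of_abs_det_ge_one
    (n : ℕ) (hn : 1 ≤ n) (A : Matrix (Fin n) (Fin n) ℝ) (hA : 1 ≤ |A.det|) :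
    (n : ℝ) ≤ ∑ i, ∑ j, (A i j) ^ 2 ∧
      ((∑ i, ∑ j, (A i j) ^ 2) = (n : ℝ) ↔ Aᵀ * A = 1) := by
  set B : Matrix (Fin n) (Fin n) ℝ := Aᵀ * A with hBdef
  have hBconj : B = Aᴴ * A := by
    rw [hBdef, conjTranspose_eq_transpose_of_trivial]
  have hB : B.IsHermitian := hBconj ▸ isHermitian_conjTranspose_mul_self A
  have hPSD : B.PosSemidef := hBconj ▸ posSemidef_conjTranspose_mul_self A
  set lam := hB.eigenvalues with hlam
  -- trace = sum of eigenvalues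
  have htrace : B.trace = ∑ i, lam i := by
    conv_lhs => rw [hB.spectral_theorem, Unitary.conjStarAlgAut_apply]
    rw [Matrix.trace_mul_comm, ← mul_assoc, Unitary.coe_star_mul_self, one_mul,
      Matrix.trace_diagonal]
    simp [hlam]
  -- Frobenius sum = trace B
  have hfrob : (∑ i, ∑ j, (A i j) ^ 2) = B.trace := by
    rw [Matrix.trace]
    simp only [Matrix.diag, hBdef, Matrix.mul_apply, Matrix.transpose_apply]
    rw [Finset.sum_comm]
    congr 1; ext i; congr 1; ext j; ring
  -- det B = (det A)^2 ≥ 1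
  have hdetB : 1 ≤ B.det := by
    have : B.det = A.det * A.det := by rw [hBdef, det_mul, det_transpose]
    nlinarith [abs_nonneg A.det, sq_abs A.det]
  have hprod : (1:ℝ) ≤ ∏ i, lam i := by
    rw [hB.det_eq_prod_eigenvalues] at hdetB
    simpa using hdetB
  have hpos : ∀ i, 0 < lam i := by
    intro i
    rcases (hPSD.eigenvalues_nonneg i).lt_or_eq with h | h
    · exact h
    · exfalso
      have : (∏ i, lam i) = 0 := Finset.prod_eq_zero (mem_univ i) h.symm
      linarith
  -- key per-term: log (lam i) + 1 ≤ lam i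
  have hkey : ∀ i, Real.log (lam i) + 1 ≤ lam i := fun i => by
    have := Real.add_one_le_exp (Real.log (lam i))
    rwa [Real.exp_log (hpos i)] at this
  have hlogsum : (0:ℝ) ≤ ∑ i, Real.log (lam i) := by
    rw [← Real.log_prod fun i _ => (hpos i).ne']
    exact Real.log_nonneg hprod
  have hsum : (n : ℝ) ≤ ∑ i, lam i := by
    have h1 : ∑ i, (Real.log (lam i) + 1) ≤ ∑ i, lam i :=
      Finset.sum_le_sum fun i _ => hkey i
    rw [Finset.sum_add_distrib, Finset.sum_const, card_univ, Fintype.card_fin,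
      nsmul_eq_mul, mul_one] at h1
    linarith
  have hge : (n : ℝ) ≤ ∑ i, ∑ j, (A i j) ^ 2 := by rw [hfrob, htrace]; exact hsum
  refine ⟨hge, ?_, ?_⟩
  · intro heq
    -- all eigenvalues = 1
    have hsumeq : ∑ i, lam i = n := by rw [← htrace, ← hfrob, heq]
    have hall : ∀ i ∈ univ, Real.log (lam i) + 1 = lam i := by
      apply (Finset.sum_eq_sum_iff_of_le fun i _ => hkey i).mp
      have h1 : ∑ i, (Real.log (lam i) + 1) ≤ ∑ i, lam i :=
        Finset.sum_le_sum fun i _ => hkey i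
      rw [Finset.sum_add_distrib, Finset.sum_const, card_univ, Fintype.card_fin,
        nsmul_eq_mul, mul_one] at h1 ⊢
      linarith
    have hlam1 : ∀ i, lam i = 1 := by
      intro i
      have h := hall i (mem_univ i)
      by_contra hne
      have hlog : Real.log (lam i) ≠ 0 := by
        intro h0
        rw [h0] at h; simp at h; exact hne h.symm
      have := Real.add_one_lt_exp hlog
      rw [Real.exp_log (hpos i)] at this
      linarith
    -- B = 1 via spectral theorem
    have : B = 1 := by
      rw [hB.spectral_theorem, Unitary.conjStarAlgAut_apply]
      have hd : (RCLike.ofReal ∘ hB.eigenvalues : Fin n → ℝ) = fun _ => 1 := by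
        funext i
        have := hlam1 i
        rw [hlam] at this
        simpa using this
      rw [hd, Matrix.diagonal_one, mul_one, (Matrix.mem_unitaryGroup_iff).mp hB.eigenvectorUnitary.2]
    rwa [hBdef] at this
  · intro h
    rw [hfrob, h, Matrix.trace_one]
    simp
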